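/- If S ⊆ ℕ^ℕ is guessable, then S_∞ = ∅. Equivalently, if S_∞ ≠ ∅ then S is not guessable. -/

import Mathlib

open Ordinal Filter Topology

/-- The first `n` values of `f` as a finite sequence. -/
def seg (f : ℕ → ℕ) (n : ℕ) : List ℕ := (List.range n).map f

/-- `[X]`: the set of infinite sequences all of whose initial segments lie in `X`. -/
def ext (X : Set (List ℕ)) : Set (ℕ → ℕ) := {f | ∀ n, seg f n ∈ X}

/-- `σ` is an initial segment of `f`. -/
def isInit (σ : List ℕ) (f : ℕ → ℕ) : Prop := seg f σ.length = σ

/-- One step of the derivative process relative to `S`. -/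
def derivStep (S : Set (ℕ → ℕ)) (X : Set (List ℕ)) : Set (List ℕ) :=
  {x ∈ X | ∃ f g : ℕ → ℕ, f ∈ ext X ∧ g ∈ ext X ∧ isInit x f ∧ isInit x g ∧ f ∈ S ∧ g ∉ S}

/-- The transfinite sequence `S_α`. -/
noncomputable def dSeq (S : Set (ℕ → ℕ)) (α : Ordinal.{0}) : Set (List ℕ) :=
  Ordinal.limitRecOn α Set.univ (fun _ X => derivStep S X)
    (fun o _ ih => ⋂ (β : Set.Iio o), ih β.1 β.2)

/-- `α(S)`: the least ordinal where the process stabilizes. -/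
noncomputable def kernelOrd (S : Set (ℕ → ℕ)) : Ordinal.{0} :=
  sInf {α | dSeq S α = dSeq S (α + 1)}

/-- `S_∞`, the kernel. -/
noncomputable def kernel (S : Set (ℕ → ℕ)) : Set (List ℕ) := dSeq S (kernelOrd S)

/-- `β(σ)`: the least ordinal `α` with `σ ∉ S_α`. -/
noncomputable def bOrd (S : Set (ℕ → ℕ)) (σ : List ℕ) : Ordinal.{0} :=
  sInf {α | σ ∉ dSeq S α}

open Classical in
/-- `S` is guessable. -/
def Guessable (S : Set (ℕ → ℕ)) : Prop :=
  ∃ G : List ℕ → ℕ, ∀ f : ℕ → ℕ,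
    Tendsto (fun n => G (seg f n)) atTop (𝓝 (if f ∈ S then 1 else 0))

/-- `Δ⁰₂`: both a countable union of closed sets and a countable intersection of open sets. -/
def IsDelta02 (S : Set (ℕ → ℕ)) : Prop :=
  (∃ F : ℕ → Set (ℕ → ℕ), (∀ n, IsClosed (F n)) ∧ S = ⋃ n, F n) ∧
  (∃ U : ℕ → Set (ℕ → ℕ), (∀ n, IsOpen (U n)) ∧ S = ⋂ n, U n)


lemma seg_length (f : ℕ → ℕ) (n : ℕ) : (seg f n).length = n := by simp [seg]

lemma seg_prefix (f : ℕ → ℕ) {m n : ℕ} (h : m ≤ n) : seg f m <+: seg f n := by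
  have : seg f m = (seg f n).take m := by
    simp [seg, ← List.map_take, List.take_range, Nat.min_eq_left h]
  rw [this]; exact List.take_prefix _ _

lemma dSeq_zero (S : Set (ℕ → ℕ)) : dSeq S 0 = Set.univ := by
  simp [dSeq]

lemma dSeq_succ (S : Set (ℕ → ℕ)) (α : Ordinal.{0}) :
    dSeq S (α + 1) = derivStep S (dSeq S α) := by
  rw [dSeq, Ordinal.add_one_eq_succ, Ordinal.limitRecOn_succ]; rfl

lemma dSeq_limit (S : Set (ℕ → ℕ)) {o : Ordinal.{0}} (ho : Order.IsSuccLimit o) :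
    dSeq S o = ⋂ (β : Set.Iio o), dSeq S β.1 := by
  rw [dSeq, Ordinal.limitRecOn_limit _ _ _ _ ho]
  rfl

lemma derivStep_subset (S : Set (ℕ → ℕ)) (X : Set (List ℕ)) : derivStep S X ⊆ X :=
  fun _ hx => hx.1

lemma dSeq_antitone (S : Set (ℕ → ℕ)) : Antitone (dSeq S) := by
  intro α β hle
  induction β using Ordinal.limitRecOn with
  | zero => rw [nonpos_iff_eq_zero.mp hle]
  | add_one β ih =>
    rcases lt_or_eq_of_le hle with hlt | rfl
    · have h1 : dSeq S (Order.succ β) ⊆ dSeq S β := by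
        rw [← Ordinal.add_one_eq_succ, dSeq_succ]; exact derivStep_subset _ _
      exact (ih (Order.lt_succ_iff.mp hlt)).trans' h1
    · rfl
  | limit β hβ ih =>
    rcases lt_or_eq_of_le hle with hlt | rfl
    · rw [dSeq_limit S hβ]
      exact Set.iInter_subset_of_subset ⟨α, hlt⟩ le_rfl
    · rfl

lemma exists_dSeq_fixed (S : Set (ℕ → ℕ)) : {α | dSeq S α = dSeq S (α + 1)}.Nonempty := by
  by_contra hemp
  push_neg at hemp
  have hne : ∀ α : Ordinal.{0}, ∃ x, x ∈ dSeq S α ∧ x ∉ dSeq S (α + 1) := by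
    intro α
    have hss : dSeq S (α + 1) ⊂ dSeq S α := by
      refine ⟨dSeq_antitone S (le_of_lt (lt_add_one α)), fun hsub => ?_⟩
      have : α ∈ {α | dSeq S α = dSeq S (α + 1)} :=
        le_antisymm hsub (dSeq_antitone S (le_of_lt (lt_add_one α)))
      rw [hemp] at this; exact this
    obtain ⟨x, hx1, hx2⟩ := Set.exists_of_ssubset hss
    exact ⟨x, hx1, hx2⟩
  choose g hg1 hg2 using hne
  apply Cardinal.not_injective_limitation_set g
  intro α _ β _ hgeq
  rcases lt_trichotomy α β with hlt | heq | hlt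
  · exfalso
    have hmem : g β ∈ dSeq S (α + 1) :=
      dSeq_antitone S (by rwa [Ordinal.add_one_eq_succ, Order.succ_le_iff]) (hg1 β)
    rw [← hgeq] at hmem
    exact hg2 α hmem
  · exact heq
  · exfalso
    have hmem : g α ∈ dSeq S (β + 1) :=
      dSeq_antitone S (by rwa [Ordinal.add_one_eq_succ, Order.succ_le_iff]) (hg1 α)
    rw [hgeq] at hmem
    exact hg2 β hmem

lemma kernel_fixed (S : Set (ℕ → ℕ)) : kernel S = derivStep S (kernel S) := by
  have h := csInf_mem (exists_dSeq_fixed S)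
  have h2 : dSeq S (kernelOrd S) = dSeq S (kernelOrd S + 1) := h
  calc kernel S = dSeq S (kernelOrd S + 1) := h2
    _ = derivStep S (kernel S) := dSeq_succ S _
theorem stmt7 (S : Set (ℕ → ℕ)) (h : Guessable S) : kernel S = ∅ := by
  classical
  obtain ⟨G, hG⟩ := h
  have hG' : ∀ f : ℕ → ℕ, ∃ N, ∀ n ≥ N, G (seg f n) = if f ∈ S then 1 else 0 := by
    intro f
    have := hG f
    rw [nhds_discrete, tendsto_pure, eventually_atTop] at this
    exact this
  by_contra hne
  obtain ⟨σ0, hσ0⟩ := Set.nonempty_iff_ne_empty.mpr hne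
  have hfix := kernel_fixed S
  -- key extension lemma
  have key : ∀ x ∈ kernel S, ∀ v : ℕ, v = 0 ∨ v = 1 →
      ∃ y, y ∈ kernel S ∧ x <+: y ∧ x.length < y.length ∧ G y = v := by
    intro x hx v hv
    rw [hfix] at hx
    obtain ⟨-, f, g, hf, hg, hxf, hxg, hfS, hgS⟩ := hx
    rcases hv with rfl | rfl
    · obtain ⟨N, hN⟩ := hG' g
      rw [if_neg hgS] at hN
      refine ⟨seg g (max N (x.length + 1)), hg _, ?_, ?_, hN _ (le_max_left _ _)⟩
      · have hle : x.length ≤ max N (x.length + 1) :=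
          le_trans (Nat.le_succ _) (le_max_right _ _)
        have hp := seg_prefix g hle
        rwa [hxg] at hp
      · rw [seg_length]
        exact lt_of_lt_of_le (Nat.lt_succ_self _) (le_max_right _ _)
    · obtain ⟨N, hN⟩ := hG' f
      rw [if_pos hfS] at hN
      refine ⟨seg f (max N (x.length + 1)), hf _, ?_, ?_, hN _ (le_max_left _ _)⟩
      · have hle : x.length ≤ max N (x.length + 1) :=
          le_trans (Nat.le_succ _) (le_max_right _ _)
        have hp := seg_prefix f hle
        rwa [hxf] at hp
      · rw [seg_length]
        exact lt_of_lt_of_le (Nat.lt_succ_self _) (le_max_right _ _)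
  choose! Y hY1 hY2 hY3 hY4 using key
  set vk : ℕ → ℕ := fun k => if Even k then 1 else 0 with hvk
  have hvk01 : ∀ k, vk k = 0 ∨ vk k = 1 := by
    intro k; by_cases hk : Even k <;> simp [hvk, hk]
  set F : ℕ → List ℕ := fun k => Nat.rec σ0 (fun k x => Y x (vk k)) k with hF
  have hFs : ∀ k, F (k + 1) = Y (F k) (vk k) := fun k => rfl
  have hmem : ∀ k, F k ∈ kernel S := by
    intro k
    induction k with
    | zero => exact hσ0
    | succ k ih => rw [hFs]; exact hY1 _ ih _ (hvk01 k)
  have hpre : ∀ k, F k <+: F (k + 1) := by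
    intro k; rw [hFs]; exact hY2 _ (hmem k) _ (hvk01 k)
  have hlen1 : ∀ k, (F k).length < (F (k + 1)).length := by
    intro k; rw [hFs]; exact hY3 _ (hmem k) _ (hvk01 k)
  have hval : ∀ k, G (F (k + 1)) = vk k := by
    intro k; rw [hFs]; exact hY4 _ (hmem k) _ (hvk01 k)
  have hchain : ∀ j k, j ≤ k → F j <+: F k := by
    intro j k hjk
    induction k with
    | zero => rw [Nat.le_zero.mp hjk]
    | succ k ih =>
      rcases Nat.lt_or_ge j (k + 1) with hlt | hge
      · exact (ih (Nat.lt_succ_iff.mp hlt)).trans (hpre k)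
      · rw [le_antisymm hjk hge]
  have hlen : ∀ k, k ≤ (F k).length := by
    intro k
    induction k with
    | zero => exact Nat.zero_le _
    | succ k ih => exact Nat.succ_le_of_lt (lt_of_le_of_lt ih (hlen1 k))
  -- the diagonal function
  set h0 : ℕ → ℕ := fun n => (F (n + 1)).getD n 0 with hh0
  have hseg : ∀ k, seg h0 (F k).length = F k := by
    intro k
    apply List.ext_getElem
    · simp [seg]
    · intro i h1 h2
      have h1' : i < (F k).length := by simpa [seg] using h1
      simp only [seg, List.getElem_map, List.getElem_range]
      show (F (i + 1)).getD i 0 = (F k)[i]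
      have hi1 : i < (F (i + 1)).length := lt_of_lt_of_le (Nat.lt_succ_self i) (hlen (i + 1))
      rw [List.getD_eq_getElem _ _ hi1]
      rcases Nat.le_total (i + 1) k with hle | hle
      · exact (hchain _ _ hle).getElem hi1
      · exact ((hchain _ _ hle).getElem h2).symm
  obtain ⟨N, hN⟩ := hG' h0
  by_cases hS : h0 ∈ S
  · rw [if_pos hS] at hN
    have h1 : G (F (2 * N + 2)) = 1 := by
      rw [← hseg (2 * N + 2)]
      exact hN _ (le_trans (by omega : N ≤ 2 * N + 2) (hlen (2 * N + 2)))
    have h2 := hval (2 * N + 1)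
    have hv : vk (2 * N + 1) = 0 := by
      simp [hvk, Nat.even_add_one, parity_simps]
    rw [h1, hv] at h2
    exact one_ne_zero h2
  · rw [if_neg hS] at hN
    have h1 : G (F (2 * N + 1)) = 0 := by
      rw [← hseg (2 * N + 1)]
      exact hN _ (le_trans (by omega : N ≤ 2 * N + 1) (hlen (2 * N + 1)))
    have h2 := hval (2 * N)
    have hv : vk (2 * N) = 1 := by
      simp [hvk, even_two_mul]
    rw [h1, hv] at h2
    exact zero_ne_one h2
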